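/- Genus-1 reconstruction identity: in the formal setting where ⟨⟨ψ^{a_1},...,ψ^{a_n}⟩⟩_{g,n} are defined from the trivial (point) theory with descendent insertions T(ψ)=t_1ψ+t_2ψ²+..., one has ⟨⟨1⟩⟩_{1,1}|_{t_0=0} = (1/24)·⟨⟨1,1,1,1⟩⟩_{0,4}|_{t_0=0} / ⟨⟨1,1,1⟩⟩_{0,3}|_{t_0=0}, where ⟨⟨1,1,1⟩⟩_{0,3}|_{t_0=0} = 1/(1−t_1) · (suitable normalization) and the genus-0 correlators are computed by integrals over M̄_{0,n+k}. -/

import Mathlib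

/-- Genus-0 ψ-integrals of a point:
`∫_{M̄_{0,m}} ψ^{a_1}···ψ^{a_m} = (m−3)!/(a_1!···a_m!)` when `Σ aᵢ = m−3`, `m ≥ 3`,
and `0` otherwise; insertions recorded as a multiset of exponents. -/
noncomputable def I0 (s : Multiset ℕ) : ℚ :=
  if 3 ≤ Multiset.card s ∧ s.sum + 3 = Multiset.card s then
    (Nat.factorial (Multiset.card s - 3) : ℚ) /
      (s.map fun a => (Nat.factorial a : ℚ)).prod
  else 0

/-- The multiset of descendent exponents (all `≥ 1`, i.e. `t_0 = 0`) encoded by a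
monomial `∏_j t_{j+1}^{d j}` in the variables `t_1, t_2, …`. -/
noncomputable def extM (d : ℕ →₀ ℕ) : Multiset ℕ :=
  d.sum fun j v => Multiset.replicate v (j + 1)

noncomputable def dfact (d : ℕ →₀ ℕ) : ℚ :=
  d.prod fun _ v => (Nat.factorial v : ℚ)

/-- The correlator `⟨⟨ψ^{a_1},…,ψ^{a_n}⟩⟩_{g,n}|_{t_0=0}
  = Σ_{k≥0} (1/k!) ∫_{M̄_{g,n+k}} ψ^{a_1}···ψ^{a_n} ∏ T(ψ)` as a formal power
series in the variables `t_1, t_2, …` (variable index `j ↦ t_{j+1}`), built from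
the ψ-integral data `I : Multiset ℕ → ℚ` and the fixed insertions `s`. -/
noncomputable def corr (I : Multiset ℕ → ℚ) (s : Multiset ℕ) : MvPowerSeries ℕ ℚ :=
  fun d => I (s + extM d) / dfact d

def w (d : ℕ →₀ ℕ) : ℕ := d.sum fun j v => v * j

lemma card_fsum {ι α : Type*} (s : Finset ι) (f : ι → Multiset α) :
    Multiset.card (∑ i ∈ s, f i) = ∑ i ∈ s, Multiset.card (f i) := by
  induction s using Finset.cons_induction <;> simp [*]

lemma sum_fsum {ι : Type*} (s : Finset ι) (f : ι → Multiset ℕ) :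
    (∑ i ∈ s, f i).sum = ∑ i ∈ s, (f i).sum := by
  induction s using Finset.cons_induction <;> simp [*]

lemma sum_extM (d : ℕ →₀ ℕ) : (extM d).sum = Multiset.card (extM d) + w d := by
  unfold extM w Finsupp.sum
  rw [sum_fsum, card_fsum, ← Finset.sum_add_distrib]
  refine Finset.sum_congr rfl fun j hj => ?_
  simp [Multiset.sum_replicate, mul_add, mul_comm]
  ring

lemma extM_single0 (k : ℕ) : extM (Finsupp.single 0 k) = Multiset.replicate k 1 := by
  unfold extM
  rw [Finsupp.sum_single_index] <;> simp

lemma extM_01 (k : ℕ) :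
    extM (Finsupp.single 0 k + Finsupp.single 1 1) = 2 ::ₘ Multiset.replicate k 1 := by
  unfold extM
  rw [Finsupp.sum_add_index' (by simp) (fun a b₁ b₂ => Multiset.replicate_add b₁ b₂ _)]
  rw [Finsupp.sum_single_index (by simp), Finsupp.sum_single_index (by simp)]
  rw [add_comm]
  simp [Multiset.singleton_add]

lemma dfact_single0 (k : ℕ) : dfact (Finsupp.single 0 k) = Nat.factorial k := by
  unfold dfact
  rw [Finsupp.prod_single_index] <;> simp

lemma dfact_01 (k : ℕ) :
    dfact (Finsupp.single 0 k + Finsupp.single 1 1) = Nat.factorial k := by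
  unfold dfact
  rw [Finsupp.prod_of_support_subset _ (s := {0,1}) ?_ _ (by simp)]
  · simp [Finsupp.single_apply, Nat.factorial]
  · intro a ha
    simp only [Finsupp.mem_support_iff, Finsupp.add_apply, Finsupp.single_apply] at ha
    by_contra h
    simp only [Finset.mem_insert, Finset.mem_singleton] at h
    push_neg at h
    simp [Ne.symm h.1, Ne.symm h.2] at ha

lemma w_single0 (k : ℕ) : w (Finsupp.single 0 k) = 0 := by
  unfold w; rw [Finsupp.sum_single_index] <;> simp

lemma w_01 (k : ℕ) : w (Finsupp.single 0 k + Finsupp.single 1 1) = 1 := by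
  unfold w
  rw [Finsupp.sum_add_index' (by simp) (by intros; ring)]
  rw [Finsupp.sum_single_index (by simp), Finsupp.sum_single_index (by simp)]
  ring

lemma w_eq_zero {d : ℕ →₀ ℕ} (h : w d = 0) : d = Finsupp.single 0 (d 0) := by
  have hz : ∀ j ∈ d.support, d j * j = 0 :=
    Finset.sum_eq_zero_iff.mp h
  ext j
  rcases Nat.eq_zero_or_pos j with rfl | hj
  · simp
  · rw [Finsupp.single_apply, if_neg (by omega)]
    by_contra hd
    have := hz j (Finsupp.mem_support_iff.mpr hd)
    rcases Nat.mul_eq_zero.mp this with h | h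
    · exact absurd h hd
    · omega

lemma w_eq_one {d : ℕ →₀ ℕ} (h : w d = 1) :
    d = Finsupp.single 0 (d 0) + Finsupp.single 1 1 := by
  have hle : ∀ j, d j * j ≤ 1 := by
    intro j
    by_cases hj : j ∈ d.support
    · calc d j * j ≤ ∑ i ∈ d.support, d i * i :=
            Finset.single_le_sum (f := fun i => d i * i) (fun i _ => Nat.zero_le _) hj
        _ = 1 := h
    · simp [Finsupp.notMem_support_iff.mp hj]
  have h2 : ∀ j, 2 ≤ j → d j = 0 := by
    intro j hj
    have := hle j; nlinarith [Nat.zero_le (d j)]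
  have h1 : d 1 = 1 := by
    have hle1 := hle 1
    rcases Nat.lt_or_ge (d 1) 1 with h0 | hge
    · exfalso
      have : w d = 0 := by
        apply Finset.sum_eq_zero
        intro j hj
        rcases j with _ | _ | j
        · simp
        · show d 1 * 1 = 0; omega
        · simp [h2 (j+2) (by omega)]
      omega
    · omega
  ext j
  rcases j with _ | _ | j
  · simp
  · simp [h1, Finsupp.single_apply]
  · simp [h2 (j+2) (by omega), Finsupp.single_apply]


lemma corrA (d : ℕ →₀ ℕ) :
    corr I0 ({0, 0, 0} : Multiset ℕ) d = if w d = 0 then 1 else 0 := by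
  by_cases hw : w d = 0
  · obtain ⟨k, rfl⟩ : ∃ k, d = Finsupp.single 0 k := ⟨d 0, w_eq_zero hw⟩
    rw [if_pos hw]
    show I0 _ / dfact _ = 1
    rw [extM_single0, dfact_single0, I0, if_pos]
    · have h1 : Multiset.card (({0,0,0} : Multiset ℕ) + Multiset.replicate k 1) = 3 + k := by
        simp; omega
      rw [h1]
      simp [Nat.factorial]
      exact Nat.factorial_ne_zero k
    · constructor
      · simp
      · simp [Multiset.sum_replicate]
  · rw [if_neg hw]
    show I0 _ / dfact _ = 0
    rw [I0, if_neg, zero_div]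
    rintro ⟨-, h⟩
    rw [Multiset.sum_add, Multiset.card_add, sum_extM] at h
    simp at h
    omega

lemma corrB (d : ℕ →₀ ℕ) :
    corr I0 ({0, 0, 0, 0} : Multiset ℕ) d =
      if w d = 1 then ((d 0 : ℚ) + 1) * ((d 0 : ℚ) + 2) / 2 else 0 := by
  by_cases hw : w d = 1
  · obtain ⟨k, rfl⟩ : ∃ k, d = Finsupp.single 0 k + Finsupp.single 1 1 :=
      ⟨d 0, w_eq_one hw⟩
    rw [if_pos hw]
    show I0 _ / dfact _ = _
    rw [extM_01, dfact_01, I0, if_pos]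
    · have h1 : Multiset.card (({0,0,0,0} : Multiset ℕ) + (2 ::ₘ Multiset.replicate k 1))
          = 5 + k := by simp; omega
      have h2 : (((({0,0,0,0} : Multiset ℕ) + (2 ::ₘ Multiset.replicate k 1))).map
          fun a => (Nat.factorial a : ℚ)).prod = 2 := by
        simp [Nat.factorial]
      have h0 : ((Finsupp.single 0 k + Finsupp.single 1 1 : ℕ →₀ ℕ)) 0 = k := by
        simp [Finsupp.single_apply]
      rw [h1, h2, h0]
      have h3 : 5 + k - 3 = k + 2 := by omega
      rw [h3]
      have h4 : (Nat.factorial (k + 2) : ℚ) = (k+1) * (k+2) * Nat.factorial k := by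
        rw [Nat.factorial_succ, Nat.factorial_succ]
        push_cast
        ring
      rw [h4]
      have h5 : (Nat.factorial k : ℚ) ≠ 0 := Nat.cast_ne_zero.mpr (Nat.factorial_ne_zero k)
      field_simp
    · constructor
      · simp
      · simp [Multiset.sum_replicate]
        ring
  · rw [if_neg hw]
    show I0 _ / dfact _ = 0
    rw [I0, if_neg, zero_div]
    rintro ⟨-, h⟩
    rw [Multiset.sum_add, Multiset.card_add, sum_extM] at h
    simp at h
    omega


section
variable (I1 : Multiset ℕ → ℚ)
    (hdim : ∀ s : Multiset ℕ, s.sum ≠ Multiset.card s → I1 s = 0)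
    (hbase : I1 {1} = 1 / 24)
    (hstring : ∀ s : Multiset ℕ, s ≠ 0 →
      I1 (0 ::ₘ s) = (s.map fun a => if a = 0 then 0 else I1 ((a - 1) ::ₘ s.erase a)).sum)
    (hdilaton : ∀ s : Multiset ℕ, s ≠ 0 →
      I1 (1 ::ₘ s) = (Multiset.card s : ℚ) * I1 s)

include hbase hdilaton in
lemma lemB : ∀ k : ℕ, I1 (Multiset.replicate (k + 1) 1) = (Nat.factorial k : ℚ) / 24 := by
  intro k
  induction k with
  | zero => simpa using hbase
  | succ k ih =>
    have hne : Multiset.replicate (k + 1) 1 ≠ 0 := by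
      simp [Multiset.replicate_succ]
    have : Multiset.replicate (k + 2) 1 = 1 ::ₘ Multiset.replicate (k + 1) 1 := by
      rw [Multiset.replicate_succ]
    rw [this, hdilaton _ hne, ih]
    simp [Nat.factorial_succ]
    push_cast
    ring

include hbase hdilaton hstring in
lemma lemA : ∀ k : ℕ, I1 (0 ::ₘ 2 ::ₘ Multiset.replicate k 1)
    = ((k : ℚ) + 1) * (Nat.factorial k : ℚ) / 24 := by
  intro k
  induction k with
  | zero =>
    simp only [Multiset.replicate_zero]
    rw [hstring (2 ::ₘ 0) (by simp)]
    simp [hbase]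
  | succ k ih =>
    rw [hstring (2 ::ₘ Multiset.replicate (k+1) 1) (by simp)]
    rw [Multiset.map_cons, Multiset.map_replicate]
    rw [Multiset.sum_cons]
    have e1 : (2 ::ₘ Multiset.replicate (k+1) 1).erase 2 = Multiset.replicate (k+1) 1 :=
      Multiset.erase_cons_head 2 _
    have e2 : (2 ::ₘ Multiset.replicate (k+1) 1).erase 1 = 2 ::ₘ Multiset.replicate k 1 := by
      rw [Multiset.erase_cons_tail _ (by decide), Multiset.replicate_succ,
        Multiset.erase_cons_head]
    have f2 : (if (2:ℕ) = 0 then 0 else I1 ((2 - 1) ::ₘ (2 ::ₘ Multiset.replicate (k+1) 1).erase 2))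
        = (Nat.factorial (k+1) : ℚ) / 24 := by
      rw [if_neg (by decide), e1]
      have : (2 - 1 : ℕ) ::ₘ Multiset.replicate (k+1) 1 = Multiset.replicate (k+2) 1 := by
        simp [Multiset.replicate_succ]
      rw [this, lemB I1 hbase hdilaton (k+1)]
    have f1 : (if (1:ℕ) = 0 then 0 else I1 ((1 - 1) ::ₘ (2 ::ₘ Multiset.replicate (k+1) 1).erase 1))
        = ((k : ℚ) + 1) * (Nat.factorial k : ℚ) / 24 := by
      rw [if_neg (by decide), e2]
      exact ih
    rw [f2, f1, Multiset.sum_replicate]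
    simp only [nsmul_eq_mul]
    push_cast [Nat.factorial_succ]
    ring

include hdim hbase hdilaton hstring in
lemma corrC (d : ℕ →₀ ℕ) :
    corr I1 ({0} : Multiset ℕ) d = if w d = 1 then ((d 0 : ℚ) + 1) / 24 else 0 := by
  by_cases hw : w d = 1
  · obtain ⟨k, rfl⟩ : ∃ k, d = Finsupp.single 0 k + Finsupp.single 1 1 :=
      ⟨d 0, w_eq_one hw⟩
    rw [if_pos hw]
    show I1 _ / dfact _ = _
    rw [extM_01, dfact_01]
    have h0 : ((Finsupp.single 0 k + Finsupp.single 1 1 : ℕ →₀ ℕ)) 0 = k := by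
      simp [Finsupp.single_apply]
    have hmul : ({0} : Multiset ℕ) + (2 ::ₘ Multiset.replicate k 1)
        = 0 ::ₘ 2 ::ₘ Multiset.replicate k 1 := by
      rw [Multiset.singleton_add]
    rw [hmul, lemA I1 hbase hstring hdilaton k, h0]
    have h5 : (Nat.factorial k : ℚ) ≠ 0 := Nat.cast_ne_zero.mpr (Nat.factorial_ne_zero k)
    field_simp
  · rw [if_neg hw]
    show I1 _ / dfact _ = 0
    rw [hdim, zero_div]
    rw [Multiset.sum_add, Multiset.card_add, sum_extM]
    simp
    omega
end


open MvPowerSeries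

section
variable (A B C1 : MvPowerSeries ℕ ℚ)
  (hA : ∀ d, coeff d A = if w d = 0 then 1 else 0)
  (hB : ∀ d, coeff d B = if w d = 1 then ((d 0 : ℚ) + 1) * ((d 0 : ℚ) + 2) / 2 else 0)
  (hC : ∀ d, coeff d C1 = if w d = 1 then ((d 0 : ℚ) + 1) / 24 else 0)

lemma coeff_mul_X0 (φ : MvPowerSeries ℕ ℚ) (d : ℕ →₀ ℕ) :
    coeff d (φ * X 0) =
      if Finsupp.single 0 1 ≤ d then coeff (d - Finsupp.single 0 1) φ else 0 := by
  rw [X, coeff_mul_monomial]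
  split_ifs <;> simp

lemma sub_w_zero {d : ℕ →₀ ℕ} (hle : Finsupp.single 0 1 ≤ d) (hw : w d ≠ 0) :
    w (d - Finsupp.single 0 1) ≠ 0 := by
  intro h
  apply hw
  have hd := w_eq_zero h
  set m := (d - Finsupp.single 0 1 : ℕ →₀ ℕ) 0 with hm
  have : d = Finsupp.single 0 m + Finsupp.single 0 1 := by
    conv_lhs => rw [← tsub_add_cancel_of_le hle, hd]
  rw [this, ← Finsupp.single_add]
  exact w_single0 _

lemma sub_w_one {d : ℕ →₀ ℕ} (hle : Finsupp.single 0 1 ≤ d) (hw : w d ≠ 1) :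
    w (d - Finsupp.single 0 1) ≠ 1 := by
  intro h
  apply hw
  have hd := w_eq_one h
  set m := (d - Finsupp.single 0 1 : ℕ →₀ ℕ) 0 with hm
  have : d = (Finsupp.single 0 m + Finsupp.single 1 1) + Finsupp.single 0 1 := by
    conv_lhs => rw [← tsub_add_cancel_of_le hle, hd]
  rw [this, add_right_comm, ← Finsupp.single_add]
  exact w_01 _

lemma not_le_single_zero : ¬ (Finsupp.single (0:ℕ) 1 ≤ (0 : ℕ →₀ ℕ)) := by
  intro hle
  simpa using Finsupp.le_def.mp hle 0

include hA in
lemma lemI : A * (1 - X 0) = 1 := by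
  ext d
  rw [mul_sub, mul_one, map_sub, coeff_mul_X0, hA]
  classical
  rw [coeff_one]
  by_cases hw : w d = 0
  · rw [if_pos hw]
    obtain ⟨k, rfl⟩ : ∃ k, d = Finsupp.single 0 k := ⟨d 0, w_eq_zero hw⟩
    cases k with
    | zero =>
      simp only [Finsupp.single_zero]
      rw [if_neg not_le_single_zero]
      simp
    | succ k =>
      have hle : Finsupp.single 0 1 ≤ Finsupp.single (0:ℕ) (k+1) :=
        Finsupp.single_le_iff.mpr (by simp)
      have hne : (Finsupp.single (0:ℕ) (k+1)) ≠ 0 := by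
        intro h
        simpa using Finsupp.single_eq_zero.mp h
      have hsub : Finsupp.single (0:ℕ) (k+1) - Finsupp.single 0 1 = Finsupp.single 0 k := by
        rw [← Finsupp.single_tsub]
        norm_num
      rw [if_pos hle, if_neg hne, hsub, hA, if_pos (w_single0 k)]
      ring
  · rw [if_neg hw]
    have hd0 : d ≠ 0 := by rintro rfl; exact hw (by simp [w])
    rw [if_neg hd0]
    split_ifs with hle
    · rw [hA, if_neg (sub_w_zero hle hw)]
      ring
    · ring

include hB hC in
lemma lemII : (24 : MvPowerSeries ℕ ℚ) * C1 = B * (1 - X 0) := by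
  have h24 : (24 : MvPowerSeries ℕ ℚ) = C (σ := ℕ) (R := ℚ) (24 : ℚ) := by
    rw [show ((24:ℚ) : ℚ) = ((24 : ℕ) : ℚ) by norm_num, map_natCast]
    norm_num
  ext d
  rw [h24, coeff_C_mul, hC, mul_sub, mul_one, map_sub, coeff_mul_X0, hB]
  by_cases hw : w d = 1
  · rw [if_pos hw, if_pos hw]
    obtain ⟨k, rfl⟩ : ∃ k, d = Finsupp.single 0 k + Finsupp.single 1 1 :=
      ⟨d 0, w_eq_one hw⟩
    have h0 : ((Finsupp.single 0 k + Finsupp.single 1 1 : ℕ →₀ ℕ)) 0 = k := by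
      simp [Finsupp.single_apply]
    rw [h0]
    cases k with
    | zero =>
      have hnle : ¬ (Finsupp.single (0:ℕ) 1
          ≤ Finsupp.single (0:ℕ) 0 + Finsupp.single 1 1) := by
        intro hle
        have := Finsupp.le_def.mp hle 0
        simp [Finsupp.single_apply] at this
      rw [if_neg hnle]
      push_cast
      ring
    | succ k =>
      have hle : Finsupp.single 0 1 ≤ Finsupp.single (0:ℕ) (k+1) + Finsupp.single 1 1 := by
        rw [Finsupp.le_def]
        intro j
        rcases Nat.eq_zero_or_pos j with rfl | hj
        · simp [Finsupp.single_apply]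
        · have hj0 : (0:ℕ) ≠ j := by omega
          simp [Finsupp.single_apply, hj0]
      have hsub : (Finsupp.single (0:ℕ) (k+1) + Finsupp.single 1 1) - Finsupp.single 0 1
          = Finsupp.single 0 k + Finsupp.single 1 1 := by
        ext j
        rcases Nat.eq_zero_or_pos j with rfl | hj
        · simp [Finsupp.tsub_apply, Finsupp.single_apply]
        · have hj0 : (0:ℕ) ≠ j := by omega
          simp [Finsupp.tsub_apply, Finsupp.single_apply, hj0]
      rw [if_pos hle, hsub, hB, if_pos (w_01 k)]
      have h0' : ((Finsupp.single 0 k + Finsupp.single 1 1 : ℕ →₀ ℕ)) 0 = k := by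
        simp [Finsupp.single_apply]
      rw [h0']
      push_cast
      ring
  · rw [if_neg hw, if_neg hw]
    split_ifs with hle
    · rw [hB, if_neg (sub_w_one hle hw)]
      ring
    · ring
end


/-- genus-1 reconstruction identity
`⟨⟨1⟩⟩_{1,1}|_{t_0=0} = (1/24)·⟨⟨1,1,1,1⟩⟩_{0,4}|_{t_0=0} / ⟨⟨1,1,1⟩⟩_{0,3}|_{t_0=0}`,
stated denominator-free (the 3-point genus-0 correlator is a unit, with constant
term 1), where the genus-1 ψ-integrals `I1` satisfy the dimension constraint, the
string and dilaton equations, and `∫_{M̄_{1,1}} ψ = 1/24`. -/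
theorem stmt12 (I1 : Multiset ℕ → ℚ)
    (hdim : ∀ s : Multiset ℕ, s.sum ≠ Multiset.card s → I1 s = 0)
    (hbase : I1 {1} = 1 / 24)
    (hstring : ∀ s : Multiset ℕ, s ≠ 0 →
      I1 (0 ::ₘ s) = (s.map fun a => if a = 0 then 0 else I1 ((a - 1) ::ₘ s.erase a)).sum)
    (hdilaton : ∀ s : Multiset ℕ, s ≠ 0 →
      I1 (1 ::ₘ s) = (Multiset.card s : ℚ) * I1 s) :
    (24 : MvPowerSeries ℕ ℚ) * corr I1 {0} * corr I0 ({0, 0, 0} : Multiset ℕ) =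
      corr I0 ({0, 0, 0, 0} : Multiset ℕ) := by
  classical
  have hA : ∀ d, MvPowerSeries.coeff d (corr I0 ({0, 0, 0} : Multiset ℕ))
      = if w d = 0 then 1 else 0 := fun d => by
    rw [MvPowerSeries.coeff_apply]; exact corrA d
  have hB : ∀ d, MvPowerSeries.coeff d (corr I0 ({0, 0, 0, 0} : Multiset ℕ))
      = if w d = 1 then ((d 0 : ℚ) + 1) * ((d 0 : ℚ) + 2) / 2 else 0 := fun d => by
    rw [MvPowerSeries.coeff_apply]; exact corrB d
  have hC : ∀ d, MvPowerSeries.coeff d (corr I1 ({0} : Multiset ℕ))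
      = if w d = 1 then ((d 0 : ℚ) + 1) / 24 else 0 := fun d => by
    rw [MvPowerSeries.coeff_apply]; exact corrC I1 hdim hbase hstring hdilaton d
  have h1 := lemI _ hA
  have h2 := lemII _ _ hB hC
  rw [h2, mul_assoc, mul_comm (1 - MvPowerSeries.X 0), h1, mul_one]
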